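/- arXiv:2406.08010 — 3 statements merged into one kernel-verified Lean document; each statement's English description precedes it below -/
import Mathlib

section
/- There exist no real numbers s1, s2 such that σ(s1 - s2) = σ(s1)·(1 - σ(s2)), where σ(t) = 1/(1+e^{-t}) is the logistic sigmoid. -/
noncomputable def sigmoid (t : ℝ) : ℝ := 1 / (1 + Real.exp (-t))

theorem no_common_solution :
    ¬ ∃ s1 s2 : ℝ, sigmoid (s1 - s2) = sigmoid s1 * (1 - sigmoid s2) := by
  rintro ⟨s1, s2, h⟩
  unfold sigmoid at h
  have h1 := Real.exp_pos (-s1)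
  have h2 := Real.exp_pos (-s2)
  have h3 := Real.exp_pos (-(s1 - s2))
  have e : Real.exp (-(s1 - s2)) = Real.exp (-s1) / Real.exp (-s2) := by
    rw [← Real.exp_sub]; ring_nf
  rw [e] at h
  have hd1 : (1 : ℝ) + Real.exp (-s1) ≠ 0 := by positivity
  have hd2 : (1 : ℝ) + Real.exp (-s2) ≠ 0 := by positivity
  have hd2' : Real.exp (-s2) ≠ 0 := ne_of_gt h2
  field_simp at h
  nlinarith [mul_pos h1 h2]
end

section
/- For all real s1, s2, the equation σ(s1 - s2) = σ(s1)·(1 - σ(s2)) is equivalent to e^{-s1} + e^{s2} = 0, which is impossible since exponentials are positive. -/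
theorem pair_point_incompatible_iff (s1 s2 : ℝ) :
    (sigmoid (s1 - s2) = sigmoid s1 * (1 - sigmoid s2) ↔
      Real.exp (-s1) + Real.exp s2 = 0) ∧
    0 < Real.exp (-s1) + Real.exp s2 := by
  have p1 := Real.exp_pos (-s1)
  have p2 := Real.exp_pos (-s2)
  have p3 := Real.exp_pos (-(s1 - s2))
  have p4 := Real.exp_pos s2
  constructor
  · unfold sigmoid
    rw [div_eq_iff (by positivity)]
    constructor
    · intro h
      have h2 : Real.exp (-(s1 - s2)) = Real.exp (-s1) * Real.exp s2 := by
        rw [← Real.exp_add]; ring_nf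
      rw [h2] at h
      have e2 : Real.exp (-s2) = (Real.exp s2)⁻¹ := by
        rw [← Real.exp_neg]
      field_simp at h
      have e3 : Real.exp (-s2) * Real.exp s2 = 1 := by
        rw [← Real.exp_add]; simp
      nlinarith [h, e3, mul_pos p1 p2]
    · intro h
      nlinarith [Real.exp_pos (-s1), Real.exp_pos s2]
  · positivity
end

section
/- Suppose σ(s_{q,x}) = E[y|q,x] for all items (the pointwise optimum) and also σ(s_{q,x1} - s_{q,x2}) = E[y1|q,x1]·(1 - E[y2|q,x2]) for all pairs with independent labels (the pairwise optimum), where each E[y|q,x] ∈ (0,1). Then for any pair, e^{-s_{q,x1}} + e^{s_{q,x2}} = 0, a contradiction; hence no scoring function simultaneously attains both optima. -/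
theorem pointwise_pairwise_optima_incompatible
    {Q X : Type*} [Nonempty Q] [Nonempty X]
    (s : Q → X → ℝ) (E : Q → X → ℝ)
    (hE : ∀ q x, E q x ∈ Set.Ioo (0:ℝ) 1)
    (hpoint : ∀ q x, sigmoid (s q x) = E q x)
    (hpair : ∀ q x1 x2, sigmoid (s q x1 - s q x2) = E q x1 * (1 - E q x2)) :
    (∀ q x1 x2, Real.exp (-(s q x1)) + Real.exp (s q x2) = 0) ∧ False := by
  have key : ∀ q x1 x2, Real.exp (-(s q x1)) + Real.exp (s q x2) = 0 := by
    intro q x1 x2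
    have h1 := hpoint q x1
    have h2 := hpoint q x2
    have h3 := hpair q x1 x2
    simp only [sigmoid] at h1 h2 h3
    set a := Real.exp (-(s q x1)) with ha
    set b := Real.exp (-(s q x2)) with hb
    have hapos : 0 < a := Real.exp_pos _
    have hbpos : 0 < b := Real.exp_pos _
    have hab : Real.exp (-(s q x1 - s q x2)) = a / b := by
      rw [ha, hb, ← Real.exp_sub]; ring_nf
    rw [hab] at h3
    rw [← h1, ← h2] at h3
    have hden : (1 : ℝ) + a / b ≠ 0 := by positivity
    have h1d : (1 : ℝ) + a ≠ 0 := by positivity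
    have h2d : (1 : ℝ) + b ≠ 0 := by positivity
    have hb' : b ≠ 0 := ne_of_gt hbpos
    have hkey : a * b + 1 = 0 := by
      field_simp at h3
      have h' : b * (a * b + 1) = 0 := by linear_combination h3
      rcases mul_eq_zero.mp h' with h | h
      · exact absurd h hb'
      · exact h
    have hbinv : Real.exp (s q x2) = b⁻¹ := by
      rw [hb, ← Real.exp_neg]; ring_nf
    rw [hbinv]
    field_simp
    linarith [hkey]
  refine ⟨key, ?_⟩
  obtain ⟨q⟩ := ‹Nonempty Q›
  obtain ⟨x⟩ := ‹Nonempty X›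
  have := key q x x
  nlinarith [Real.exp_pos (-(s q x)), Real.exp_pos (s q x)]
end
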